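/- Fix a>0, b>0 and λ∈(0,1), and assume T₁ < t₀−λ. There exists a constant c>0, depending only on a, b, λ and the doubling constant c_d, such that for every s≥1: z_a^b(λ;s) ≥ c ∫_{λ^s}^{λ} ∫_{1/λ}^{∞} ( m_λ(ρ, t₀−η) / |B(x₀,√η)| ) ρ^{−(1+b)} dρ η^{−1} dη. -/

import Mathlib

open MeasureTheory Set
open scoped ENNReal NNReal

noncomputable section

/-- ℝ^N with Euclidean structure and Lebesgue measure. -/
abbrev Vec (N : ℕ) := EuclideanSpace ℝ (Fin N)

/-- The `d`-ball `B(x,r) = {y : d(x,y) < r}`. -/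
def dBall {N : ℕ} (d : Vec N → Vec N → ℝ) (x : Vec N) (r : ℝ) : Set (Vec N) :=
  {y | d x y < r}

/-- Lebesgue measure is doubling with respect to `d`, with doubling constant `cd`. -/
def Doubling {N : ℕ} (d : Vec N → Vec N → ℝ) (cd : ℝ) : Prop :=
  ∀ (x : Vec N) (r : ℝ), 0 < r →
    volume (dBall d x (2 * r)) ≤ ENNReal.ofReal cd * volume (dBall d x r)

/-- `d` is a metric on ℝ^N inducing the Euclidean topology (with bounded `d`-balls,
as in assumption (D1) of the paper). -/
structure GoodMetric {N : ℕ} (d : Vec N → Vec N → ℝ) : Prop where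
  nonneg : ∀ x y, 0 ≤ d x y
  eq_zero_iff : ∀ x y, d x y = 0 ↔ x = y
  symm : ∀ x y, d x y = d y x
  triangle : ∀ x y z, d x z ≤ d x y + d y z
  cont : Continuous fun p : Vec N × Vec N => d p.1 p.2
  finer : ∀ (x : Vec N) (ε : ℝ), 0 < ε → ∃ δ > 0, ∀ y, d x y < δ → dist x y < ε
  bounded : ∀ (x : Vec N) (r : ℝ), Bornology.IsBounded (dBall d x r)

/-- The strip `S = ℝ^N × (T₁,T₂)`. -/
def strip (N : ℕ) (T₁ T₂ : EReal) : Set (Vec N × ℝ) :=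
  {z | T₁ < (z.2 : EReal) ∧ (z.2 : EReal) < T₂}

/-- The `d`-Gaussian kernel of exponent `a`. -/
def gaussK {N : ℕ} (d : Vec N → Vec N → ℝ) (a : ℝ) (z ζ : Vec N × ℝ) : ℝ≥0∞ :=
  if ζ.2 < z.2 then
    (volume (dBall d z.1 (Real.sqrt (z.2 - ζ.2))))⁻¹ *
      ENNReal.ofReal (Real.exp (-a * d z.1 ζ.1 ^ 2 / (z.2 - ζ.2)))
  else 0

/-- Capacity of `F` with respect to the kernel `K`: supremum of total masses of
nonnegative Radon measures supported in `F` whose `K`-potential is `≤ 1` on `X`. -/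
def capac {α : Type*} [TopologicalSpace α] [MeasurableSpace α]
    (X : Set α) (K : α → α → ℝ≥0∞) (F : Set α) : ℝ≥0∞ :=
  ⨆ (μ : Measure α) (_ : μ.InnerRegular ∧ IsLocallyFiniteMeasure μ ∧ μ Fᶜ = 0 ∧
      ∀ z ∈ X, ∫⁻ ζ, K z ζ ∂μ ≤ 1), μ F

/-- The parabolic counterpart `d̂` of `d`. -/
def pdist {N : ℕ} (d : Vec N → Vec N → ℝ) (z ζ : Vec N × ℝ) : ℝ :=
  (d z.1 ζ.1 ^ 4 + (z.2 - ζ.2) ^ 2) ^ (1 / 4 : ℝ)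

/-- The parabolic ball `B̂(z,r)` (as a subset of ℝ^{N+1}). -/
def pBall {N : ℕ} (d : Vec N → Vec N → ℝ) (z : Vec N × ℝ) (r : ℝ) : Set (Vec N × ℝ) :=
  {ζ | pdist d z ζ < r}

/-- The ring-shaped set `Ω_k^h(z₀,λ)`. -/
def ringSet {N : ℕ} (d : Vec N → Vec N → ℝ) (S Ω : Set (Vec N × ℝ)) (z₀ : Vec N × ℝ)
    (lam : ℝ) (k h : ℤ) : Set (Vec N × ℝ) :=
  {ζ ∈ S \ Ω | lam ^ (k + 1) ≤ z₀.2 - ζ.2 ∧ z₀.2 - ζ.2 ≤ lam ^ k ∧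
    (1 / lam) ^ (h - 1) ≤ Real.exp (d z₀.1 ζ.1 ^ 2 / (z₀.2 - ζ.2)) ∧
    Real.exp (d z₀.1 ζ.1 ^ 2 / (z₀.2 - ζ.2)) ≤ (1 / lam) ^ h ∧
    pdist d z₀ ζ ≤ Real.sqrt lam}

/-- The set `D_k^h(z₀,λ)`. -/
def DSet {N : ℕ} (d : Vec N → Vec N → ℝ) (S Ω : Set (Vec N × ℝ)) (z₀ : Vec N × ℝ)
    (lam : ℝ) (k h : ℤ) : Set (Vec N × ℝ) :=
  {ζ ∈ S \ Ω | lam ^ (k + 1) ≤ z₀.2 - ζ.2 ∧ z₀.2 - ζ.2 ≤ lam ^ k ∧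
    Real.exp (d z₀.1 ζ.1 ^ 2 / (z₀.2 - ζ.2)) ≤ (1 / lam) ^ h ∧
    pdist d z₀ ζ ≤ Real.sqrt lam}

/-- The Wiener-type series `z_a^b(λ;s)`. -/
def zSeries {N : ℕ} (d : Vec N → Vec N → ℝ) (S Ω : Set (Vec N × ℝ)) (z₀ : Vec N × ℝ)
    (a b lam s : ℝ) : ℝ≥0∞ :=
  ∑' k : ℕ, ∑' h : ℕ,
    if 1 ≤ k ∧ (k : ℝ) ≤ s ∧ 1 ≤ h then
      ENNReal.ofReal (lam ^ (b * (h : ℝ))) *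
        capac S (gaussK d a) (DSet d S Ω z₀ lam (k : ℤ) (h : ℤ)) /
        volume (dBall d z₀.1 (lam ^ ((k : ℝ) / 2)))
    else 0

/-- The section `E_λ(ρ,τ)`. -/
def Eset {N : ℕ} (d : Vec N → Vec N → ℝ) (S Ω : Set (Vec N × ℝ)) (z₀ : Vec N × ℝ)
    (lam ρ τ : ℝ) : Set (Vec N) :=
  {x | (x, τ) ∈ S \ Ω ∧ pdist d z₀ (x, τ) ≤ Real.sqrt lam ∧
    Real.exp (d z₀.1 x ^ 2 / (z₀.2 - τ)) ≤ ρ}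

end
noncomputable section
namespace Aux

variable {N : ℕ} {d : Vec N → Vec N → ℝ} {cd a : ℝ}

lemma cont_d (hd : GoodMetric d) (x : Vec N) : Continuous fun y => d x y :=
  hd.cont.comp (Continuous.prodMk_right x)

lemma dBall_isOpen (hd : GoodMetric d) (x : Vec N) (r : ℝ) : IsOpen (dBall d x r) :=
  (isOpen_Iio (a := r)).preimage (cont_d hd x)

lemma dBall_mono (x : Vec N) {r r' : ℝ} (h : r ≤ r') : dBall d x r ⊆ dBall d x r' :=
  fun _ hy => lt_of_lt_of_le hy h

lemma vol_dBall_pos (hd : GoodMetric d) (x : Vec N) {r : ℝ} (hr : 0 < r) :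
    0 < volume (dBall d x r) :=
  (dBall_isOpen hd x r).measure_pos volume ⟨x, by
    simpa [dBall, (hd.eq_zero_iff x x).2 rfl] using hr⟩

lemma vol_dBall_lt_top (hd : GoodMetric d) (x : Vec N) (r : ℝ) :
    volume (dBall d x r) < ∞ :=
  (hd.bounded x r).measure_lt_top

lemma vol_dBall_two_pow (hdb : Doubling d cd) (x : Vec N) (m : ℕ) {r : ℝ} (hr : 0 < r) :
    volume (dBall d x (2 ^ m * r)) ≤ ENNReal.ofReal cd ^ m * volume (dBall d x r) := by
  induction m with
  | zero => simp
  | succ m ih =>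
      have h1 : (2 : ℝ) ^ (m + 1) * r = 2 * (2 ^ m * r) := by ring
      have h2 : 0 < (2 : ℝ) ^ m * r := by positivity
      calc volume (dBall d x (2 ^ (m + 1) * r)) = volume (dBall d x (2 * (2 ^ m * r))) := by
            rw [h1]
        _ ≤ ENNReal.ofReal cd * volume (dBall d x (2 ^ m * r)) := hdb x _ h2
        _ ≤ ENNReal.ofReal cd * (ENNReal.ofReal cd ^ m * volume (dBall d x r)) := by
            exact mul_le_mul_right ih _
        _ = ENNReal.ofReal cd ^ (m + 1) * volume (dBall d x r) := by ring

/-- The constant `C₀ = Σ_j cd^j exp(-a j²)`. -/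
def C0 (a cd : ℝ) : ℝ := ∑' j : ℕ, cd ^ j * Real.exp (-a * (j : ℝ) ^ 2)

lemma C0_summable (ha : 0 < a) (hcd : 1 < cd) :
    Summable fun j : ℕ => cd ^ j * Real.exp (-a * (j : ℝ) ^ 2) := by
  have hcd0 : 0 < cd := lt_trans one_pos hcd
  apply summable_of_ratio_norm_eventually_le (r := 1 / 2) (by norm_num)
  obtain ⟨J, hJ⟩ : ∃ J : ℕ, cd / a < (J : ℝ) := exists_nat_gt _
  rw [Filter.eventually_atTop]
  refine ⟨J, fun j hj => ?_⟩
  have hpos : ∀ n : ℕ, 0 < cd ^ n * Real.exp (-a * (n : ℝ) ^ 2) := fun n => by positivity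
  rw [Real.norm_eq_abs, Real.norm_eq_abs, abs_of_pos (hpos _), abs_of_pos (hpos _)]
  have hsplit : cd ^ (j + 1) * Real.exp (-a * ((j : ℝ) + 1) ^ 2)
      = (cd ^ j * Real.exp (-a * (j : ℝ) ^ 2)) * (cd * Real.exp (-(a * (2 * (j : ℝ) + 1)))) := by
    have he : -a * ((j : ℝ) + 1) ^ 2 = -a * (j : ℝ) ^ 2 + -(a * (2 * (j : ℝ) + 1)) := by ring
    rw [pow_succ, he, Real.exp_add]
    ring
  have hj' : (J : ℝ) ≤ (j : ℝ) := by exact_mod_cast hj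
  have hkey : cd * Real.exp (-(a * (2 * (j : ℝ) + 1))) ≤ 1 / 2 := by
    have h1 : Real.exp (-(a * (2 * (j : ℝ) + 1))) ≤ 1 / (1 + a * (2 * (j : ℝ) + 1)) := by
      rw [Real.exp_neg, ← one_div]
      have h2 : 1 + a * (2 * (j : ℝ) + 1) ≤ Real.exp (a * (2 * (j : ℝ) + 1)) := by
        have := Real.add_one_le_exp (a * (2 * (j : ℝ) + 1))
        linarith
      have hx : 0 < 1 + a * (2 * (j : ℝ) + 1) := by positivity
      exact one_div_le_one_div_of_le hx h2
    have h3 : cd * Real.exp (-(a * (2 * (j : ℝ) + 1))) ≤ cd / (1 + a * (2 * (j : ℝ) + 1)) := by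
      rw [div_eq_mul_inv, ← one_div]
      exact mul_le_mul_of_nonneg_left h1 hcd0.le
    refine h3.trans ?_
    rw [div_le_div_iff₀ (by positivity) (by norm_num)]
    have : cd < a * (J : ℝ) := by
      rw [div_lt_iff₀ ha] at hJ; linarith [hJ]
    nlinarith [mul_le_mul_of_nonneg_left hj' ha.le]
  calc cd ^ (j + 1) * Real.exp (-a * ((j + 1 : ℕ) : ℝ) ^ 2)
      = (cd ^ j * Real.exp (-a * (j : ℝ) ^ 2)) * (cd * Real.exp (-(a * (2 * (j : ℝ) + 1)))) := by
        push_cast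
        exact hsplit
    _ ≤ (cd ^ j * Real.exp (-a * (j : ℝ) ^ 2)) * (1 / 2) := by
        exact mul_le_mul_of_nonneg_left hkey (hpos j).le
    _ = 1 / 2 * (cd ^ j * Real.exp (-a * (j : ℝ) ^ 2)) := by ring

lemma C0_pos (ha : 0 < a) (hcd : 1 < cd) : 0 < C0 a cd := by
  have h := C0_summable ha hcd
  have h0 : (1 : ℝ) ≤ C0 a cd := by
    have := Summable.le_tsum h 0 (fun n _ => by positivity)
    simpa [Aux.C0] using this
  linarith

variable {N : ℕ} {d : Vec N → Vec N → ℝ} {cd a : ℝ}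

lemma gauss_integral_bound (hd : GoodMetric d) (hdb : Doubling d cd)
    (ha : 0 < a) (hcd : 1 < cd) (x : Vec N) {r : ℝ} (hr : 0 < r) :
    ∫⁻ ξ, ENNReal.ofReal (Real.exp (-a * d x ξ ^ 2 / r ^ 2))
      ≤ ENNReal.ofReal (C0 a cd) * volume (dBall d x r) := by
  have hcd0 : (0 : ℝ) ≤ cd := by linarith
  set A : ℕ → Set (Vec N) := fun j => {ξ | (j : ℝ) * r ≤ d x ξ ∧ d x ξ < ((j : ℝ) + 1) * r}
    with hA
  have hAmeas : ∀ j, MeasurableSet (A j) := by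
    intro j
    have h1 : MeasurableSet {ξ | (j : ℝ) * r ≤ d x ξ} :=
      measurableSet_le measurable_const (cont_d hd x).measurable
    have h2 : MeasurableSet {ξ | d x ξ < ((j : ℝ) + 1) * r} :=
      measurableSet_lt (cont_d hd x).measurable measurable_const
    exact h1.inter h2
  have hcov : (Set.univ : Set (Vec N)) = ⋃ j : ℕ, A j := by
    ext ξ
    simp only [mem_univ, mem_iUnion, true_iff]
    refine ⟨⌊d x ξ / r⌋₊, ?_, ?_⟩
    · have h1 : (⌊d x ξ / r⌋₊ : ℝ) ≤ d x ξ / r := Nat.floor_le (div_nonneg (hd.nonneg x ξ) hr.le)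
      calc (⌊d x ξ / r⌋₊ : ℝ) * r ≤ d x ξ / r * r := by
            exact mul_le_mul_of_nonneg_right h1 hr.le
        _ = d x ξ := by field_simp
    · have h2 : d x ξ / r < ⌊d x ξ / r⌋₊ + 1 := Nat.lt_floor_add_one _
      calc d x ξ = d x ξ / r * r := by field_simp
        _ < ((⌊d x ξ / r⌋₊ : ℝ) + 1) * r := by
            exact mul_lt_mul_of_pos_right h2 hr
  calc ∫⁻ ξ, ENNReal.ofReal (Real.exp (-a * d x ξ ^ 2 / r ^ 2))
      = ∫⁻ ξ in ⋃ j : ℕ, A j, ENNReal.ofReal (Real.exp (-a * d x ξ ^ 2 / r ^ 2)) := by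
        rw [← hcov, Measure.restrict_univ]
    _ ≤ ∑' j : ℕ, ∫⁻ ξ in A j, ENNReal.ofReal (Real.exp (-a * d x ξ ^ 2 / r ^ 2)) :=
        lintegral_iUnion_le _ _
    _ ≤ ∑' j : ℕ, ENNReal.ofReal (Real.exp (-a * (j : ℝ) ^ 2)) * volume (A j) := by
        refine ENNReal.tsum_le_tsum fun j => ?_
        calc ∫⁻ ξ in A j, ENNReal.ofReal (Real.exp (-a * d x ξ ^ 2 / r ^ 2))
            ≤ ∫⁻ _ in A j, ENNReal.ofReal (Real.exp (-a * (j : ℝ) ^ 2)) := by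
              refine setLIntegral_mono measurable_const fun ξ hξ => ?_
              refine ENNReal.ofReal_le_ofReal (Real.exp_le_exp.2 ?_)
              have hdj : (j : ℝ) * r ≤ d x ξ := hξ.1
              have hd0 : (0 : ℝ) ≤ (j : ℝ) * r := by positivity
              have hsq : ((j : ℝ) * r) ^ 2 ≤ d x ξ ^ 2 := by
                exact pow_le_pow_left₀ hd0 hdj 2
              rw [div_le_iff₀ (by positivity)]
              nlinarith [sq_nonneg (d x ξ), sq_nonneg r]
          _ = ENNReal.ofReal (Real.exp (-a * (j : ℝ) ^ 2)) * volume (A j) := by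
              rw [setLIntegral_const]
    _ ≤ ∑' j : ℕ, ENNReal.ofReal (Real.exp (-a * (j : ℝ) ^ 2)) *
          (ENNReal.ofReal cd ^ j * volume (dBall d x r)) := by
        refine ENNReal.tsum_le_tsum fun j => mul_le_mul_right ?_ _
        have hsub : A j ⊆ dBall d x (2 ^ j * r) := by
          intro ξ hξ
          have h1 : ((j : ℝ) + 1) ≤ 2 ^ j := by
            exact_mod_cast (Nat.lt_two_pow_self : j < 2 ^ j)
          have := hξ.2
          have h2 : ((j : ℝ) + 1) * r ≤ 2 ^ j * r := mul_le_mul_of_nonneg_right h1 hr.le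
          exact lt_of_lt_of_le this h2
        calc volume (A j) ≤ volume (dBall d x (2 ^ j * r)) := measure_mono hsub
          _ ≤ ENNReal.ofReal cd ^ j * volume (dBall d x r) := vol_dBall_two_pow hdb x j hr
    _ = (∑' j : ℕ, ENNReal.ofReal (cd ^ j * Real.exp (-a * (j : ℝ) ^ 2))) *
          volume (dBall d x r) := by
        rw [← ENNReal.tsum_mul_right]
        congr 1
        ext j
        rw [ENNReal.ofReal_mul (by positivity), ENNReal.ofReal_pow hcd0]
        ring
    _ = ENNReal.ofReal (C0 a cd) * volume (dBall d x r) := by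
        congr 1
        rw [C0]
        exact (ENNReal.ofReal_tsum_of_nonneg (fun j => by positivity) (C0_summable ha hcd)).symm



lemma measurable_gaussK (hd : GoodMetric d) (z : Vec N × ℝ) :
    Measurable (gaussK d a z) := by
  have hset : MeasurableSet {ζ : Vec N × ℝ | ζ.2 < z.2} :=
    measurableSet_lt measurable_snd measurable_const
  have h1 : Measurable fun ζ : Vec N × ℝ =>
      (volume (dBall d z.1 (Real.sqrt (z.2 - ζ.2))))⁻¹ := by
    have hanti : Antitone fun τ : ℝ => volume (dBall d z.1 (Real.sqrt (z.2 - τ))) := by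
      intro τ τ' h
      exact measure_mono (dBall_mono z.1 (Real.sqrt_le_sqrt (by linarith)))
    exact (hanti.measurable.comp measurable_snd).inv
  have h2 : Measurable fun ζ : Vec N × ℝ =>
      ENNReal.ofReal (Real.exp (-a * d z.1 ζ.1 ^ 2 / (z.2 - ζ.2))) := by
    have hd1 : Measurable fun ζ : Vec N × ℝ => d z.1 ζ.1 :=
      (hd.cont.comp (continuous_const.prodMk continuous_fst)).measurable
    exact ENNReal.measurable_ofReal.comp (Real.measurable_exp.comp
      (((hd1.pow_const 2).const_mul (-a)).div (measurable_const.sub measurable_snd)))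
  unfold gaussK
  exact Measurable.ite hset (h1.mul h2) measurable_const

lemma potential_bound (hd : GoodMetric d) (hdb : Doubling d cd)
    (ha : 0 < a) (hcd : 1 < cd) {D : Set (Vec N × ℝ)}
    {t1 t2 : ℝ} (h12 : t1 ≤ t2) (hsub : ∀ ζ ∈ D, t1 ≤ ζ.2 ∧ ζ.2 ≤ t2) (z : Vec N × ℝ) :
    ∫⁻ ζ in D, gaussK d a z ζ ≤ ENNReal.ofReal (C0 a cd * (t2 - t1)) := by
  have hC0 : 0 < C0 a cd := C0_pos ha hcd
  have hinner : ∀ τ : ℝ, ∫⁻ ξ, gaussK d a z (ξ, τ) ≤ ENNReal.ofReal (C0 a cd) := by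
    intro τ
    by_cases hτ : τ < z.2
    · have hp : 0 < z.2 - τ := by linarith
      set r := Real.sqrt (z.2 - τ) with hrdef
      have hr : 0 < r := Real.sqrt_pos.2 hp
      have hr2 : r ^ 2 = z.2 - τ := Real.sq_sqrt hp.le
      have hmeas : Measurable fun ξ : Vec N =>
          ENNReal.ofReal (Real.exp (-a * d z.1 ξ ^ 2 / (z.2 - τ))) := by
        exact ENNReal.measurable_ofReal.comp (Real.measurable_exp.comp
          ((((cont_d hd z.1).measurable.pow_const 2).const_mul (-a)).div_const _))
      have heq : ∀ ξ : Vec N, gaussK d a z (ξ, τ) =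
          (volume (dBall d z.1 r))⁻¹ *
            ENNReal.ofReal (Real.exp (-a * d z.1 ξ ^ 2 / (z.2 - τ))) := by
        intro ξ
        simp only [gaussK, if_pos hτ, hrdef]
      have hV0 : volume (dBall d z.1 r) ≠ 0 := (vol_dBall_pos hd z.1 hr).ne'
      have hVtop : volume (dBall d z.1 r) ≠ ∞ := (vol_dBall_lt_top hd z.1 r).ne
      calc ∫⁻ ξ, gaussK d a z (ξ, τ)
          = (volume (dBall d z.1 r))⁻¹ *
            ∫⁻ ξ, ENNReal.ofReal (Real.exp (-a * d z.1 ξ ^ 2 / (z.2 - τ))) := by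
            simp only [heq]
            rw [lintegral_const_mul _ hmeas]
        _ ≤ (volume (dBall d z.1 r))⁻¹ *
            (ENNReal.ofReal (C0 a cd) * volume (dBall d z.1 r)) := by
            refine mul_le_mul_right ?_ _
            have := gauss_integral_bound hd hdb ha hcd z.1 hr
            rw [hr2] at this
            exact this
        _ = ENNReal.ofReal (C0 a cd) *
            ((volume (dBall d z.1 r))⁻¹ * volume (dBall d z.1 r)) := by ring
        _ = ENNReal.ofReal (C0 a cd) := by
            rw [ENNReal.inv_mul_cancel hV0 hVtop, mul_one]
    · have : ∀ ξ : Vec N, gaussK d a z (ξ, τ) = 0 := fun ξ => by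
        simp only [gaussK, if_neg hτ]
      simp [this]
  calc ∫⁻ ζ in D, gaussK d a z ζ
      ≤ ∫⁻ ζ in (Set.univ : Set (Vec N)) ×ˢ Set.Icc t1 t2, gaussK d a z ζ := by
        refine lintegral_mono_set fun ζ hζ => ?_
        exact ⟨trivial, (hsub ζ hζ).1, (hsub ζ hζ).2⟩
    _ = ∫⁻ τ in Set.Icc t1 t2, ∫⁻ ξ, gaussK d a z (ξ, τ) := by
        rw [Measure.volume_eq_prod, ← Measure.prod_restrict, Measure.restrict_univ]
        exact lintegral_prod_symm _ (measurable_gaussK hd z).aemeasurable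
    _ ≤ ∫⁻ _ in Set.Icc t1 t2, ENNReal.ofReal (C0 a cd) :=
        lintegral_mono_ae (Filter.Eventually.of_forall fun τ => hinner τ)
    _ = ENNReal.ofReal (C0 a cd) * volume (Set.Icc t1 t2) := setLIntegral_const _ _
    _ = ENNReal.ofReal (C0 a cd * (t2 - t1)) := by
        rw [Real.volume_Icc, ← ENNReal.ofReal_mul hC0.le]

lemma vol_le_capac (hd : GoodMetric d) (hdb : Doubling d cd)
    (ha : 0 < a) (hcd : 1 < cd) (X : Set (Vec N × ℝ)) {D : Set (Vec N × ℝ)}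
    (hDm : MeasurableSet D) (hDb : Bornology.IsBounded D)
    {t1 t2 : ℝ} (h12 : t1 ≤ t2) (hsub : ∀ ζ ∈ D, t1 ≤ ζ.2 ∧ ζ.2 ≤ t2)
    {L : ℝ} (hL : 0 < L) (hLe : C0 a cd * (t2 - t1) ≤ L) :
    volume D ≤ ENNReal.ofReal L * capac X (gaussK d a) D := by
  set c₁ : ℝ≥0∞ := ENNReal.ofReal L with hc₁
  have hc₁0 : c₁ ≠ 0 := by simp [hc₁, hL]
  have hc₁top : c₁ ≠ ∞ := ENNReal.ofReal_ne_top
  set μ : Measure (Vec N × ℝ) := c₁⁻¹ • volume.restrict D with hμ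
  have hfin : IsFiniteMeasure (volume.restrict D) := by
    constructor
    rw [Measure.restrict_apply_univ]
    exact hDb.measure_lt_top
  have hcond : μ.InnerRegular ∧ IsLocallyFiniteMeasure μ ∧ μ Dᶜ = 0 ∧
      ∀ z ∈ X, ∫⁻ ζ, gaussK d a z ζ ∂μ ≤ 1 := by
    refine ⟨?_, ?_, ?_, ?_⟩
    · have h1 : (volume.restrict D : Measure (Vec N × ℝ)).InnerRegular :=
        @MeasureTheory.Measure.InnerRegularCompactLTTop.instInnerRegularOfSigmaFinite _ _ _ _ _ _
      exact Measure.InnerRegular.smul c₁⁻¹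
    · have : IsFiniteMeasure μ := by
        constructor
        rw [hμ, Measure.smul_apply, smul_eq_mul, Measure.restrict_apply_univ]
        exact ENNReal.mul_lt_top (by simp [ENNReal.inv_lt_top, pos_iff_ne_zero, hc₁0])
          hDb.measure_lt_top
      infer_instance
    · rw [hμ, Measure.smul_apply, Measure.restrict_apply hDm.compl, compl_inter_self,
        measure_empty, smul_eq_mul, mul_zero]
    · intro z _
      rw [hμ, lintegral_smul_measure]
      calc c₁⁻¹ * ∫⁻ ζ in D, gaussK d a z ζ
          ≤ c₁⁻¹ * c₁ := by
            refine mul_le_mul_right ?_ _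
            exact (potential_bound hd hdb ha hcd h12 hsub z).trans
              (ENNReal.ofReal_le_ofReal hLe)
        _ = 1 := ENNReal.inv_mul_cancel hc₁0 hc₁top
  have hcap : c₁⁻¹ * volume D ≤ capac X (gaussK d a) D := by
    have hμD : μ D = c₁⁻¹ * volume D := by
      rw [hμ, Measure.smul_apply, Measure.restrict_apply hDm, inter_self, smul_eq_mul]
    calc c₁⁻¹ * volume D = μ D := hμD.symm
      _ ≤ capac X (gaussK d a) D := le_iSup_of_le μ (le_iSup_of_le hcond le_rfl)
  calc volume D = c₁ * (c₁⁻¹ * volume D) := by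
        rw [← mul_assoc, ENNReal.mul_inv_cancel hc₁0 hc₁top, one_mul]
    _ ≤ c₁ * capac X (gaussK d a) D := mul_le_mul_right hcap _

lemma measurable_d_fst (hd : GoodMetric d) (x₀ : Vec N) :
    Measurable fun ζ : Vec N × ℝ => d x₀ ζ.1 :=
  (hd.cont.comp (continuous_const.prodMk continuous_fst)).measurable

lemma measurable_pdist (hd : GoodMetric d) (z₀ : Vec N × ℝ) :
    Measurable fun ζ : Vec N × ℝ => pdist d z₀ ζ := by
  have h1 : Continuous fun ζ : Vec N × ℝ => d z₀.1 ζ.1 ^ 4 + (z₀.2 - ζ.2) ^ 2 :=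
    (((hd.cont.comp (continuous_const.prodMk continuous_fst)).pow 4)).add
      ((continuous_const.sub continuous_snd).pow 2)
  exact ((Real.continuous_rpow_const (by norm_num)).comp h1).measurable

lemma measurable_expterm (hd : GoodMetric d) (z₀ : Vec N × ℝ) :
    Measurable fun ζ : Vec N × ℝ => Real.exp (d z₀.1 ζ.1 ^ 2 / (z₀.2 - ζ.2)) :=
  Real.measurable_exp.comp (((measurable_d_fst hd z₀.1).pow_const 2).div
    (measurable_const.sub measurable_snd))

lemma strip_measurable (N : ℕ) (T₁ T₂ : EReal) : MeasurableSet (strip N T₁ T₂) := by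
  have : strip N T₁ T₂ = (fun z : Vec N × ℝ => (z.2 : EReal)) ⁻¹' (Set.Ioo T₁ T₂) := rfl
  rw [this]
  exact (isOpen_Ioo.preimage (continuous_coe_real_ereal.comp continuous_snd)).measurableSet

lemma DSet_measurable (hd : GoodMetric d) {S Ω : Set (Vec N × ℝ)}
    (hS : MeasurableSet S) (hΩ : MeasurableSet Ω) (z₀ : Vec N × ℝ) (lam : ℝ) (k h : ℤ) :
    MeasurableSet (DSet d S Ω z₀ lam k h) := by
  have heq : DSet d S Ω z₀ lam k h = (S \ Ω) ∩
      ({ζ | lam ^ (k + 1) ≤ z₀.2 - ζ.2} ∩ ({ζ | z₀.2 - ζ.2 ≤ lam ^ k} ∩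
        ({ζ | Real.exp (d z₀.1 ζ.1 ^ 2 / (z₀.2 - ζ.2)) ≤ (1 / lam) ^ h} ∩
          {ζ | pdist d z₀ ζ ≤ Real.sqrt lam}))) := by
    ext ζ
    simp only [DSet, mem_setOf_eq, mem_inter_iff, mem_diff]
  rw [heq]
  exact (hS.diff hΩ).inter
    ((measurableSet_le measurable_const (measurable_const.sub measurable_snd)).inter
      ((measurableSet_le (measurable_const.sub measurable_snd) measurable_const).inter
        ((measurableSet_le (measurable_expterm hd z₀) measurable_const).inter
          (measurableSet_le (measurable_pdist hd z₀) measurable_const))))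

lemma spatial_of_pdist (hd : GoodMetric d) {z₀ ζ : Vec N × ℝ} {lam : ℝ}
    (h : pdist d z₀ ζ ≤ Real.sqrt lam) : d z₀.1 ζ.1 ≤ Real.sqrt lam := by
  have hX0 : (0 : ℝ) ≤ d z₀.1 ζ.1 ^ 4 + (z₀.2 - ζ.2) ^ 2 := by
    have := hd.nonneg z₀.1 ζ.1; positivity
  have hp4 : pdist d z₀ ζ ^ 4 = d z₀.1 ζ.1 ^ 4 + (z₀.2 - ζ.2) ^ 2 := by
    rw [pdist, ← Real.rpow_natCast ((d z₀.1 ζ.1 ^ 4 + (z₀.2 - ζ.2) ^ 2) ^ (1 / 4 : ℝ)) 4,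
      ← Real.rpow_mul hX0]
    norm_num
  have hd4 : d z₀.1 ζ.1 ^ 4 ≤ Real.sqrt lam ^ 4 := by
    have h1 : pdist d z₀ ζ ^ 4 ≤ Real.sqrt lam ^ 4 :=
      pow_le_pow_left₀ (Real.rpow_nonneg hX0 _) h 4
    nlinarith [sq_nonneg (z₀.2 - ζ.2)]
  exact le_of_pow_le_pow_left₀ (by norm_num) (Real.sqrt_nonneg _) hd4

lemma DSet_bounded (hd : GoodMetric d) {S Ω : Set (Vec N × ℝ)}
    (z₀ : Vec N × ℝ) (lam : ℝ) (k h : ℤ) :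
    Bornology.IsBounded (DSet d S Ω z₀ lam k h) := by
  have hsub : DSet d S Ω z₀ lam k h ⊆
      (dBall d z₀.1 (Real.sqrt lam + 1)) ×ˢ Set.Icc (z₀.2 - lam ^ k) (z₀.2 - lam ^ (k + 1)) := by
    rintro ζ ⟨-, h1, h2, -, h4⟩
    refine ⟨?_, ?_, ?_⟩
    · have := spatial_of_pdist hd h4
      simp only [dBall, mem_setOf_eq]
      linarith
    · linarith
    · linarith
  exact Bornology.IsBounded.subset ((hd.bounded _ _).prod (Metric.isBounded_Icc _ _)) hsub

lemma inv_ball_bound (hd : GoodMetric d) (hdb : Doubling d cd) (hcd : 1 < cd)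
    {lam : ℝ} (hl0 : 0 < lam) (hl1 : lam < 1) {m₀ : ℕ} (hm₀ : Real.sqrt lam⁻¹ ≤ 2 ^ m₀)
    (x₀ : Vec N) (k : ℕ) {η : ℝ} (hη : lam ^ (k + 1) ≤ η) :
    (volume (dBall d x₀ (Real.sqrt η)))⁻¹ ≤
      ENNReal.ofReal (cd ^ m₀) * (volume (dBall d x₀ (lam ^ ((k : ℝ) / 2))))⁻¹ := by
  have hcd0 : (0 : ℝ) < cd := lt_trans one_pos hcd
  have hrk : (0 : ℝ) < Real.sqrt (lam ^ (k + 1)) := Real.sqrt_pos.2 (by positivity)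
  -- radius comparison
  have e1 : Real.sqrt (lam ^ (k + 1)) = lam ^ (((k : ℝ) + 1) / 2) := by
    rw [Real.sqrt_eq_rpow, ← Real.rpow_natCast lam (k + 1), ← Real.rpow_mul hl0.le]
    push_cast
    ring_nf
  have e3 : lam ^ (-(1 / 2) : ℝ) = Real.sqrt lam⁻¹ := by
    rw [Real.sqrt_eq_rpow, ← Real.rpow_neg_one lam, ← Real.rpow_mul hl0.le]
    norm_num
  have step1 : lam ^ ((k : ℝ) / 2) ≤ 2 ^ m₀ * Real.sqrt (lam ^ (k + 1)) := by
    have e2 : lam ^ ((k : ℝ) / 2) = lam ^ (-(1 / 2) : ℝ) * lam ^ (((k : ℝ) + 1) / 2) := by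
      rw [← Real.rpow_add hl0]
      ring_nf
    rw [e2, e3, e1]
    exact mul_le_mul_of_nonneg_right hm₀ (Real.rpow_nonneg hl0.le _)
  have step2 : volume (dBall d x₀ (lam ^ ((k : ℝ) / 2))) ≤
      ENNReal.ofReal (cd ^ m₀) * volume (dBall d x₀ (Real.sqrt η)) := by
    calc volume (dBall d x₀ (lam ^ ((k : ℝ) / 2)))
        ≤ volume (dBall d x₀ (2 ^ m₀ * Real.sqrt (lam ^ (k + 1)))) :=
          measure_mono (dBall_mono x₀ step1)
      _ ≤ ENNReal.ofReal cd ^ m₀ * volume (dBall d x₀ (Real.sqrt (lam ^ (k + 1)))) :=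
          vol_dBall_two_pow hdb x₀ m₀ hrk
      _ ≤ ENNReal.ofReal (cd ^ m₀) * volume (dBall d x₀ (Real.sqrt η)) := by
          rw [ENNReal.ofReal_pow hcd0.le]
          exact mul_le_mul_right (measure_mono (dBall_mono x₀ (Real.sqrt_le_sqrt hη))) _
  -- invert
  set C : ℝ≥0∞ := ENNReal.ofReal (cd ^ m₀) with hC
  have hC0 : C ≠ 0 := by simp [hC, pow_pos hcd0 m₀]
  have hCtop : C ≠ ∞ := ENNReal.ofReal_ne_top
  have hinv : (C * volume (dBall d x₀ (Real.sqrt η)))⁻¹ ≤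
      (volume (dBall d x₀ (lam ^ ((k : ℝ) / 2))))⁻¹ := ENNReal.inv_le_inv' step2
  rw [ENNReal.mul_inv (Or.inl hC0) (Or.inl hCtop)] at hinv
  calc (volume (dBall d x₀ (Real.sqrt η)))⁻¹
      = C * (C⁻¹ * (volume (dBall d x₀ (Real.sqrt η)))⁻¹) := by
        rw [← mul_assoc, ENNReal.mul_inv_cancel hC0 hCtop, one_mul]
    _ ≤ C * (volume (dBall d x₀ (lam ^ ((k : ℝ) / 2))))⁻¹ := mul_le_mul_right hinv _

lemma invpow_eq {lam : ℝ} (hl0 : 0 < lam) (n : ℕ) :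
    ((1 / lam) ^ n : ℝ) = lam ^ (-(n : ℝ)) := by
  rw [one_div, inv_pow, ← Real.rpow_natCast lam n, ← Real.rpow_neg hl0.le]

lemma Ioi_subset_iUnion_Ioc {lam : ℝ} (hl0 : 0 < lam) (hl1 : lam < 1) :
    Set.Ioi (1 / lam) ⊆ ⋃ j : ℕ, Set.Ioc ((1 / lam) ^ (j + 1)) ((1 / lam) ^ (j + 2)) := by
  intro ρ hρ
  have hinv : 1 < 1 / lam := by
    rw [lt_div_iff₀ hl0]
    linarith
  have hρ1 : 1 / lam < ρ := hρ
  have hex : ∃ n : ℕ, ρ ≤ (1 / lam) ^ (n + 2) := by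
    obtain ⟨n, hn⟩ := pow_unbounded_of_one_lt ρ hinv
    exact ⟨n, hn.le.trans (pow_le_pow_right₀ hinv.le (by omega))⟩
  set j := Nat.find hex with hj
  refine Set.mem_iUnion.2 ⟨j, ?_, Nat.find_spec hex⟩
  rcases Nat.eq_zero_or_pos j with h0 | hpos
  · rw [h0]
    simpa using hρ1
  · have hmin := Nat.find_min hex (m := j - 1) (by omega)
    push_neg at hmin
    have : j - 1 + 2 = j + 1 := by omega
    rwa [this] at hmin

lemma Ioo_subset_iUnion_Ioc {lam s : ℝ} (hl0 : 0 < lam) (hl1 : lam < 1) (hs : 1 ≤ s) :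
    Set.Ioo (lam ^ s) lam ⊆
      ⋃ k : ℕ, if 1 ≤ k ∧ (k : ℝ) ≤ s then Set.Ioc (lam ^ (k + 1)) (lam ^ k) else ∅ := by
  intro η hη
  have hη0 : 0 < η := lt_trans (Real.rpow_pos_of_pos hl0 s) hη.1
  have hex : ∃ n : ℕ, lam ^ (n + 2) < η := by
    have h1 : Filter.Tendsto (fun n : ℕ => lam ^ n) Filter.atTop (nhds 0) :=
      tendsto_pow_atTop_nhds_zero_of_lt_one hl0.le hl1
    have h2 := (h1.eventually (eventually_lt_nhds hη0)).exists
    obtain ⟨n, hn⟩ := h2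
    exact ⟨n, lt_of_le_of_lt (pow_le_pow_of_le_one hl0.le hl1.le (by omega)) hn⟩
  set m := Nat.find hex with hm
  set k := m + 1 with hk
  have hklow : lam ^ (k + 1) < η := Nat.find_spec hex
  have hkhigh : η ≤ lam ^ k := by
    rcases Nat.eq_zero_or_pos m with h0 | hpos
    · rw [hk, h0, pow_one]
      exact hη.2.le
    · have hmin := Nat.find_min hex (m := m - 1) (by omega)
      push_neg at hmin
      have : m - 1 + 2 = k := by omega
      rwa [this] at hmin
  have hks : (k : ℝ) ≤ s := by
    by_contra hcon
    push_neg at hcon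
    have h1 : lam ^ s > lam ^ (k : ℝ) := by
      exact Real.rpow_lt_rpow_of_exponent_gt hl0 hl1 hcon
    have h2 : lam ^ (k : ℝ) = lam ^ k := Real.rpow_natCast lam k
    have := hη.1
    rw [← h2] at hkhigh
    linarith
  refine Set.mem_iUnion.2 ⟨k, ?_⟩
  rw [if_pos ⟨by omega, hks⟩]
  exact ⟨hklow, hkhigh⟩

lemma scal_ineq {lam b : ℝ} (hl0 : 0 < lam) (j : ℕ) :
    (((1 / lam) ^ (j + 1) : ℝ)) ^ (-(1 + b)) * (1 / lam) ^ (j + 2) =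
      lam ^ (-(b + 1) : ℝ) * lam ^ (b * ((j : ℝ) + 2)) := by
  rw [invpow_eq hl0, invpow_eq hl0, ← Real.rpow_mul hl0.le, ← Real.rpow_add hl0,
    ← Real.rpow_add hl0]
  congr 1
  push_cast
  ring

lemma per_k (hd : GoodMetric d) (hdb : Doubling d cd) (ha : 0 < a) (hcd : 1 < cd)
    {b lam : ℝ} (hb : 0 < b) (hl0 : 0 < lam) (hl1 : lam < 1)
    {m₀ : ℕ} (hm₀ : Real.sqrt lam⁻¹ ≤ 2 ^ m₀)
    {S Ω : Set (Vec N × ℝ)} (hS : MeasurableSet S) (hΩ : MeasurableSet Ω)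
    (z₀ : Vec N × ℝ) (k : ℕ) :
    ∫⁻ η in Set.Ioc (lam ^ (k + 1)) (lam ^ k),
      (∫⁻ ρ in Set.Ioi (1 / lam),
        volume (Eset d S Ω z₀ lam ρ (z₀.2 - η)) / volume (dBall d z₀.1 (Real.sqrt η)) *
          ENNReal.ofReal (ρ ^ (-(1 + b)))) * ENNReal.ofReal η⁻¹
    ≤ ENNReal.ofReal (lam ^ (-(b + 2) : ℝ) * cd ^ m₀ * C0 a cd) *
        ∑' j : ℕ, ENNReal.ofReal (lam ^ (b * ((j : ℝ) + 2))) *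
          capac S (gaussK d a) (DSet d S Ω z₀ lam (k : ℤ) ((j : ℤ) + 2)) /
          volume (dBall d z₀.1 (lam ^ ((k : ℝ) / 2))) := by
  have hcd0 : (0 : ℝ) < cd := lt_trans one_pos hcd
  have hC0 : 0 < C0 a cd := C0_pos ha hcd
  set Vk := volume (dBall d z₀.1 (lam ^ ((k : ℝ) / 2))) with hVkdef
  have hVk0 : Vk ≠ 0 := (vol_dBall_pos hd z₀.1 (Real.rpow_pos_of_pos hl0 _)).ne'
  set Dj : ℕ → Set (Vec N × ℝ) := fun j => DSet d S Ω z₀ lam (k : ℤ) ((j : ℤ) + 2) with hDjdef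
  have hDjm : ∀ j, MeasurableSet (Dj j) := fun j => DSet_measurable hd hS hΩ z₀ lam _ _
  set sl : ℕ → ℝ → ℝ≥0∞ := fun j η => volume {x | (x, z₀.2 - η) ∈ Dj j} with hsldef
  have hslm : ∀ j, Measurable (sl j) := fun j =>
    (measurable_measure_prodMk_right (hDjm j)).comp (measurable_const.sub measurable_id)
  set G : ℝ → ℝ≥0∞ := fun η => ∑' j : ℕ, ENNReal.ofReal (lam ^ (b * ((j : ℝ) + 2))) * sl j η
    with hGdef
  have hGm : Measurable G := Measurable.ennreal_tsum fun j => (hslm j).const_mul _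
  -- E-set into slice of D-set
  have hE_subset : ∀ j : ℕ, ∀ η ∈ Set.Ioc (lam ^ (k + 1)) (lam ^ k),
      volume (Eset d S Ω z₀ lam ((1 / lam) ^ (j + 2)) (z₀.2 - η)) ≤ sl j η := by
    intro j η hη
    refine measure_mono fun x hx => ?_
    obtain ⟨hx1, hx2, hx3⟩ := hx
    have hzz : z₀.2 - (z₀.2 - η) = η := by ring
    have hcast1 : ((k : ℤ) + 1) = ((k + 1 : ℕ) : ℤ) := by push_cast; ring
    have hcast2 : ((j : ℤ) + 2) = ((j + 2 : ℕ) : ℤ) := by push_cast; ring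
    refine ⟨hx1, ?_, ?_, ?_, hx2⟩
    · show lam ^ ((k : ℤ) + 1) ≤ z₀.2 - (z₀.2 - η)
      rw [hzz, hcast1, zpow_natCast]
      exact hη.1.le
    · show z₀.2 - (z₀.2 - η) ≤ lam ^ (k : ℤ)
      rw [hzz, zpow_natCast]
      exact hη.2
    · show Real.exp (d z₀.1 x ^ 2 / (z₀.2 - (z₀.2 - η))) ≤ (1 / lam) ^ ((j : ℤ) + 2)
      rw [hcast2, zpow_natCast]
      exact hx3
  -- pointwise bound in η
  have hpoint : ∀ η ∈ Set.Ioc (lam ^ (k + 1)) (lam ^ k),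
      (∫⁻ ρ in Set.Ioi (1 / lam),
        volume (Eset d S Ω z₀ lam ρ (z₀.2 - η)) / volume (dBall d z₀.1 (Real.sqrt η)) *
          ENNReal.ofReal (ρ ^ (-(1 + b)))) * ENNReal.ofReal η⁻¹
      ≤ (ENNReal.ofReal (lam ^ (-(b + 1) : ℝ) * cd ^ m₀ * lam ^ (-((k : ℝ) + 1))) * Vk⁻¹) *
          G η := by
    intro η hη
    have hη0 : 0 < η := lt_trans (by positivity) hη.1
    set W := volume (dBall d z₀.1 (Real.sqrt η)) with hWdef
    have hWinv : W⁻¹ ≤ ENNReal.ofReal (cd ^ m₀) * Vk⁻¹ :=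
      inv_ball_bound hd hdb hcd hl0 hl1 hm₀ z₀.1 k hη.1.le
    have hinner : (∫⁻ ρ in Set.Ioi (1 / lam),
        volume (Eset d S Ω z₀ lam ρ (z₀.2 - η)) / W * ENNReal.ofReal (ρ ^ (-(1 + b))))
        ≤ ∑' j : ℕ, (ENNReal.ofReal (lam ^ (-(b + 1) : ℝ) * lam ^ (b * ((j : ℝ) + 2)))) *
            (ENNReal.ofReal (cd ^ m₀) * Vk⁻¹ * sl j η) := by
      calc (∫⁻ ρ in Set.Ioi (1 / lam),
          volume (Eset d S Ω z₀ lam ρ (z₀.2 - η)) / W * ENNReal.ofReal (ρ ^ (-(1 + b))))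
          ≤ ∫⁻ ρ in ⋃ j : ℕ, Set.Ioc ((1 / lam) ^ (j + 1)) ((1 / lam) ^ (j + 2)),
              volume (Eset d S Ω z₀ lam ρ (z₀.2 - η)) / W * ENNReal.ofReal (ρ ^ (-(1 + b))) :=
            lintegral_mono_set (Ioi_subset_iUnion_Ioc hl0 hl1)
        _ ≤ ∑' j : ℕ, ∫⁻ ρ in Set.Ioc ((1 / lam) ^ (j + 1)) ((1 / lam) ^ (j + 2)),
              volume (Eset d S Ω z₀ lam ρ (z₀.2 - η)) / W * ENNReal.ofReal (ρ ^ (-(1 + b))) :=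
            lintegral_iUnion_le _ _
        _ ≤ ∑' j : ℕ, (ENNReal.ofReal (lam ^ (-(b + 1) : ℝ) * lam ^ (b * ((j : ℝ) + 2)))) *
              (ENNReal.ofReal (cd ^ m₀) * Vk⁻¹ * sl j η) := by
            refine ENNReal.tsum_le_tsum fun j => ?_
            have hlow : (0 : ℝ) < (1 / lam) ^ (j + 1) := by positivity
            calc ∫⁻ ρ in Set.Ioc ((1 / lam) ^ (j + 1)) ((1 / lam) ^ (j + 2)),
                volume (Eset d S Ω z₀ lam ρ (z₀.2 - η)) / W * ENNReal.ofReal (ρ ^ (-(1 + b)))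
                ≤ ∫⁻ _ in Set.Ioc ((1 / lam) ^ (j + 1)) ((1 / lam) ^ (j + 2)),
                    volume (Eset d S Ω z₀ lam ((1 / lam) ^ (j + 2)) (z₀.2 - η)) / W *
                      ENNReal.ofReal ((((1 / lam) ^ (j + 1) : ℝ)) ^ (-(1 + b))) := by
                  refine setLIntegral_mono measurable_const fun ρ hρ => ?_
                  refine mul_le_mul' ?_ ?_
                  · refine ENNReal.div_le_div_right (measure_mono fun x hx => ?_) _
                    exact ⟨hx.1, hx.2.1, hx.2.2.trans hρ.2⟩
                  · exact ENNReal.ofReal_le_ofReal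
                      (Real.rpow_le_rpow_of_nonpos hlow hρ.1.le (by linarith))
              _ = volume (Eset d S Ω z₀ lam ((1 / lam) ^ (j + 2)) (z₀.2 - η)) / W *
                    ENNReal.ofReal ((((1 / lam) ^ (j + 1) : ℝ)) ^ (-(1 + b))) *
                    volume (Set.Ioc ((1 / lam) ^ (j + 1) : ℝ) ((1 / lam) ^ (j + 2))) :=
                  setLIntegral_const _ _
              _ ≤ sl j η * (ENNReal.ofReal (cd ^ m₀) * Vk⁻¹) *
                    ENNReal.ofReal ((((1 / lam) ^ (j + 1) : ℝ)) ^ (-(1 + b))) *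
                    ENNReal.ofReal ((1 / lam) ^ (j + 2)) := by
                  rw [Real.volume_Ioc]
                  refine mul_le_mul' (mul_le_mul' ?_ le_rfl) (ENNReal.ofReal_le_ofReal (by linarith [pow_pos (by positivity : (0:ℝ) < 1/lam) (j+1)]))
                  rw [ENNReal.div_eq_inv_mul, mul_comm]
                  exact mul_le_mul' (hE_subset j η hη) hWinv
              _ = (ENNReal.ofReal (lam ^ (-(b + 1) : ℝ) * lam ^ (b * ((j : ℝ) + 2)))) *
                    (ENNReal.ofReal (cd ^ m₀) * Vk⁻¹ * sl j η) := by
                  rw [mul_assoc, ← ENNReal.ofReal_mul (Real.rpow_nonneg hlow.le _),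
                    scal_ineq hl0 j]
                  rw [ENNReal.ofReal_mul (Real.rpow_nonneg hl0.le _)]
                  ring
    -- now multiply by η⁻¹ and collect
    have hηinv : ENNReal.ofReal η⁻¹ ≤ ENNReal.ofReal (lam ^ (-((k : ℝ) + 1))) := by
      refine ENNReal.ofReal_le_ofReal ?_
      have h1 : (lam ^ (k + 1) : ℝ)⁻¹ = lam ^ (-((k : ℝ) + 1)) := by
        rw [← Real.rpow_natCast lam (k + 1), ← Real.rpow_neg hl0.le]
        push_cast
        ring_nf
      rw [← h1]
      exact inv_anti₀ (by positivity) hη.1.le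
    calc (∫⁻ ρ in Set.Ioi (1 / lam),
        volume (Eset d S Ω z₀ lam ρ (z₀.2 - η)) / W * ENNReal.ofReal (ρ ^ (-(1 + b)))) *
          ENNReal.ofReal η⁻¹
        ≤ (∑' j : ℕ, (ENNReal.ofReal (lam ^ (-(b + 1) : ℝ) * lam ^ (b * ((j : ℝ) + 2)))) *
            (ENNReal.ofReal (cd ^ m₀) * Vk⁻¹ * sl j η)) *
            ENNReal.ofReal (lam ^ (-((k : ℝ) + 1))) := mul_le_mul' hinner hηinv
      _ = (ENNReal.ofReal (lam ^ (-(b + 1) : ℝ) * cd ^ m₀ * lam ^ (-((k : ℝ) + 1))) * Vk⁻¹) *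
            G η := by
          rw [show G η = ∑' j : ℕ, ENNReal.ofReal (lam ^ (b * ((j : ℝ) + 2))) * sl j η
            from rfl]
          rw [← ENNReal.tsum_mul_right, ← ENNReal.tsum_mul_left]
          refine tsum_congr fun j => ?_
          rw [ENNReal.ofReal_mul (Real.rpow_nonneg hl0.le _),
            ENNReal.ofReal_mul (by positivity : (0:ℝ) ≤ lam ^ (-(b+1) : ℝ) * cd ^ m₀),
            ENNReal.ofReal_mul (Real.rpow_nonneg hl0.le _)]
          ring
  -- capacity bound for the integral of each slice
  have hcap : ∀ j : ℕ, ∫⁻ η in Set.Ioc (lam ^ (k + 1)) (lam ^ k), sl j η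
      ≤ ENNReal.ofReal (C0 a cd * lam ^ k) * capac S (gaussK d a) (Dj j) := by
    intro j
    have hchange : ∫⁻ η, sl j η = volume (Dj j) := by
      have h1 : ∫⁻ η, sl j η = ∫⁻ τ, volume {x | (x, τ) ∈ Dj j} :=
        MeasurePreserving.lintegral_comp_emb
          (Measure.measurePreserving_sub_left volume z₀.2)
          (MeasurableEquiv.subLeft z₀.2).measurableEmbedding
          (fun τ => volume {x | (x, τ) ∈ Dj j})
      rw [h1, Measure.volume_eq_prod, Measure.prod_apply_symm (hDjm j)]
      rfl
    have hsub : ∀ ζ ∈ Dj j, z₀.2 - lam ^ k ≤ ζ.2 ∧ ζ.2 ≤ z₀.2 - lam ^ (k + 1) := by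
      rintro ζ ⟨-, h1, h2, -, -⟩
      have hcast1 : ((k : ℤ) + 1) = ((k + 1 : ℕ) : ℤ) := by push_cast; ring
      rw [hcast1, zpow_natCast] at h1
      rw [zpow_natCast] at h2
      constructor <;> linarith
    have h12 : z₀.2 - lam ^ k ≤ z₀.2 - lam ^ (k + 1) :=
      sub_le_sub_left (pow_le_pow_of_le_one hl0.le hl1.le (by omega)) _
    have hLe : C0 a cd * ((z₀.2 - lam ^ (k + 1)) - (z₀.2 - lam ^ k)) ≤ C0 a cd * lam ^ k := by
      have h1 : (z₀.2 - lam ^ (k + 1)) - (z₀.2 - lam ^ k) ≤ lam ^ k := by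
        have := pow_pos hl0 (k + 1)
        linarith
      exact mul_le_mul_of_nonneg_left h1 hC0.le
    calc ∫⁻ η in Set.Ioc (lam ^ (k + 1)) (lam ^ k), sl j η
        ≤ ∫⁻ η, sl j η := setLIntegral_le_lintegral _ _
      _ = volume (Dj j) := hchange
      _ ≤ ENNReal.ofReal (C0 a cd * lam ^ k) * capac S (gaussK d a) (Dj j) :=
          vol_le_capac hd hdb ha hcd S (hDjm j) (DSet_bounded hd z₀ lam _ _) h12 hsub
            (by positivity) hLe
  -- assemble
  set P : ℝ := lam ^ (-(b + 1) : ℝ) * cd ^ m₀ * lam ^ (-((k : ℝ) + 1)) with hPdef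
  have hPnn : 0 ≤ P := by positivity
  have hre : P * (C0 a cd * lam ^ k) = lam ^ (-(b + 2) : ℝ) * cd ^ m₀ * C0 a cd := by
    have e1 : lam ^ (-((k : ℝ) + 1)) * lam ^ ((k : ℕ) : ℝ) = lam ^ (-(1 : ℝ)) := by
      rw [← Real.rpow_add hl0]
      congr 1
      push_cast
      ring
    have e2 : lam ^ (-(b + 1) : ℝ) * lam ^ (-(1 : ℝ)) = lam ^ (-(b + 2) : ℝ) := by
      rw [← Real.rpow_add hl0]
      congr 1
      ring
    rw [hPdef, ← Real.rpow_natCast lam k]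
    calc lam ^ (-(b + 1) : ℝ) * cd ^ m₀ * lam ^ (-((k : ℝ) + 1)) *
          (C0 a cd * lam ^ ((k : ℕ) : ℝ))
        = (lam ^ (-(b + 1) : ℝ) * (lam ^ (-((k : ℝ) + 1)) * lam ^ ((k : ℕ) : ℝ))) *
            (cd ^ m₀ * C0 a cd) := by ring
      _ = (lam ^ (-(b + 1) : ℝ) * lam ^ (-(1 : ℝ))) * (cd ^ m₀ * C0 a cd) := by rw [e1]
      _ = lam ^ (-(b + 2) : ℝ) * cd ^ m₀ * C0 a cd := by rw [e2]; ring
  calc ∫⁻ η in Set.Ioc (lam ^ (k + 1)) (lam ^ k),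
      (∫⁻ ρ in Set.Ioi (1 / lam),
        volume (Eset d S Ω z₀ lam ρ (z₀.2 - η)) / volume (dBall d z₀.1 (Real.sqrt η)) *
          ENNReal.ofReal (ρ ^ (-(1 + b)))) * ENNReal.ofReal η⁻¹
      ≤ ∫⁻ η in Set.Ioc (lam ^ (k + 1)) (lam ^ k),
          (ENNReal.ofReal P * Vk⁻¹) * G η :=
        setLIntegral_mono ((hGm.const_mul _)) hpoint
    _ = (ENNReal.ofReal P * Vk⁻¹) * ∫⁻ η in Set.Ioc (lam ^ (k + 1)) (lam ^ k), G η :=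
        lintegral_const_mul _ hGm
    _ ≤ (ENNReal.ofReal P * Vk⁻¹) *
          ∑' j : ℕ, ENNReal.ofReal (lam ^ (b * ((j : ℝ) + 2))) *
            (ENNReal.ofReal (C0 a cd * lam ^ k) * capac S (gaussK d a) (Dj j)) := by
        refine mul_le_mul_right ?_ _
        calc ∫⁻ η in Set.Ioc (lam ^ (k + 1)) (lam ^ k), G η
            = ∑' j : ℕ, ∫⁻ η in Set.Ioc (lam ^ (k + 1)) (lam ^ k),
                ENNReal.ofReal (lam ^ (b * ((j : ℝ) + 2))) * sl j η :=
              lintegral_tsum fun j => ((hslm j).const_mul _).aemeasurable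
          _ = ∑' j : ℕ, ENNReal.ofReal (lam ^ (b * ((j : ℝ) + 2))) *
                ∫⁻ η in Set.Ioc (lam ^ (k + 1)) (lam ^ k), sl j η :=
              tsum_congr fun j => lintegral_const_mul _ (hslm j)
          _ ≤ _ := ENNReal.tsum_le_tsum fun j => mul_le_mul_right (hcap j) _
    _ = ENNReal.ofReal (lam ^ (-(b + 2) : ℝ) * cd ^ m₀ * C0 a cd) *
          ∑' j : ℕ, ENNReal.ofReal (lam ^ (b * ((j : ℝ) + 2))) *
            capac S (gaussK d a) (DSet d S Ω z₀ lam (k : ℤ) ((j : ℤ) + 2)) /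
            volume (dBall d z₀.1 (lam ^ ((k : ℝ) / 2))) := by
        rw [← ENNReal.tsum_mul_left, ← ENNReal.tsum_mul_left]
        refine tsum_congr fun j => ?_
        rw [div_eq_mul_inv, ← hre, ENNReal.ofReal_mul hPnn]
        ring

end Aux
end

/-- The integral bound (5.2) in the paper: the Wiener-type series `z_a^b(λ;s)`
dominates the double integral of the measures of the sections `E_λ`. -/
theorem stmt11 (a b lam cd : ℝ) (ha : 0 < a) (hb : 0 < b)
    (hlam : lam ∈ Set.Ioo 0 1) (hcd : 1 < cd) :
    ∃ c : ℝ, 0 < c ∧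
      ∀ (N : ℕ), 1 ≤ N → ∀ d : Vec N → Vec N → ℝ, GoodMetric d → Doubling d cd →
      ∀ T₁ T₂ : EReal, T₁ < T₂ →
      ∀ Ω : Set (Vec N × ℝ), IsOpen Ω → Bornology.IsBounded Ω →
        closure Ω ⊆ strip N T₁ T₂ →
      ∀ z₀ : Vec N × ℝ, z₀ ∈ frontier Ω → T₁ < ((z₀.2 - lam : ℝ) : EReal) →
      ∀ s : ℝ, 1 ≤ s →
      ENNReal.ofReal c *
        ∫⁻ η in Set.Ioo (lam ^ s) lam,
          (∫⁻ ρ in Set.Ioi (1 / lam),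
            volume (Eset d (strip N T₁ T₂) Ω z₀ lam ρ (z₀.2 - η)) /
              volume (dBall d z₀.1 (Real.sqrt η)) *
              ENNReal.ofReal (ρ ^ (-(1 + b)))) *
            ENNReal.ofReal η⁻¹ ≤
        zSeries d (strip N T₁ T₂) Ω z₀ a b lam s := by
  obtain ⟨hl0, hl1⟩ := hlam
  obtain ⟨m₀, hm₀'⟩ := pow_unbounded_of_one_lt (Real.sqrt lam⁻¹) (one_lt_two (α := ℝ))
  have hm₀ : Real.sqrt lam⁻¹ ≤ 2 ^ m₀ := hm₀'.le
  have hC0 : 0 < Aux.C0 a cd := Aux.C0_pos ha hcd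
  have hcd0 : (0 : ℝ) < cd := lt_trans one_pos hcd
  set K : ℝ := lam ^ (-(b + 2) : ℝ) * cd ^ m₀ * Aux.C0 a cd with hKdef
  have hKpos : 0 < K := by positivity
  refine ⟨K⁻¹, by positivity, ?_⟩
  intro N hN d hd hdb T₁ T₂ hT Ω hΩo hΩb hclos z₀ hz₀ hT₁ s hs
  have hSm : MeasurableSet (strip N T₁ T₂) := Aux.strip_measurable N T₁ T₂
  have hΩm : MeasurableSet Ω := hΩo.measurableSet
  set z : ℝ≥0∞ := zSeries d (strip N T₁ T₂) Ω z₀ a b lam s with hzdef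
  -- per-k sums appearing in zSeries
  set termK : ℕ → ℝ≥0∞ := fun k =>
    ∑' j : ℕ, ENNReal.ofReal (lam ^ (b * ((j : ℝ) + 2))) *
      capac (strip N T₁ T₂) (gaussK d a) (DSet d (strip N T₁ T₂) Ω z₀ lam (k : ℤ) ((j : ℤ) + 2)) /
      volume (dBall d z₀.1 (lam ^ ((k : ℝ) / 2))) with htermK
  have hsum : (∑' k : ℕ, if 1 ≤ k ∧ (k : ℝ) ≤ s then termK k else 0) ≤ z := by
    rw [hzdef, zSeries]
    refine ENNReal.tsum_le_tsum fun k => ?_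
    by_cases hk : 1 ≤ k ∧ (k : ℝ) ≤ s
    · rw [if_pos hk]
      set g : ℕ → ℝ≥0∞ := fun h =>
        if 1 ≤ k ∧ (k : ℝ) ≤ s ∧ 1 ≤ h then
          ENNReal.ofReal (lam ^ (b * (h : ℝ))) *
            capac (strip N T₁ T₂) (gaussK d a)
              (DSet d (strip N T₁ T₂) Ω z₀ lam (k : ℤ) (h : ℤ)) /
            volume (dBall d z₀.1 (lam ^ ((k : ℝ) / 2)))
        else 0 with hg
      have heq : termK k = ∑' j : ℕ, g (j + 2) := by
        rw [htermK]
        refine tsum_congr fun j => ?_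
        rw [hg]
        simp only []
        rw [if_pos ⟨hk.1, hk.2, by omega⟩]
        have hc1 : ((j + 2 : ℕ) : ℝ) = (j : ℝ) + 2 := by push_cast; ring
        have hc2 : ((j + 2 : ℕ) : ℤ) = (j : ℤ) + 2 := by push_cast; ring
        rw [hc1, hc2]
      rw [heq]
      exact ENNReal.tsum_comp_le_tsum_of_injective (add_left_injective 2) g
    · rw [if_neg hk]
      exact zero_le
  -- the main estimate
  have hmain : (∫⁻ η in Set.Ioo (lam ^ s) lam,
      (∫⁻ ρ in Set.Ioi (1 / lam),
        volume (Eset d (strip N T₁ T₂) Ω z₀ lam ρ (z₀.2 - η)) /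
          volume (dBall d z₀.1 (Real.sqrt η)) *
          ENNReal.ofReal (ρ ^ (-(1 + b)))) *
        ENNReal.ofReal η⁻¹) ≤ ENNReal.ofReal K * z := by
    calc (∫⁻ η in Set.Ioo (lam ^ s) lam,
        (∫⁻ ρ in Set.Ioi (1 / lam),
          volume (Eset d (strip N T₁ T₂) Ω z₀ lam ρ (z₀.2 - η)) /
            volume (dBall d z₀.1 (Real.sqrt η)) *
            ENNReal.ofReal (ρ ^ (-(1 + b)))) *
          ENNReal.ofReal η⁻¹)
        ≤ ∫⁻ η in ⋃ k : ℕ, (if 1 ≤ k ∧ (k : ℝ) ≤ s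
              then Set.Ioc (lam ^ (k + 1)) (lam ^ k) else ∅),
            (∫⁻ ρ in Set.Ioi (1 / lam),
              volume (Eset d (strip N T₁ T₂) Ω z₀ lam ρ (z₀.2 - η)) /
                volume (dBall d z₀.1 (Real.sqrt η)) *
                ENNReal.ofReal (ρ ^ (-(1 + b)))) *
              ENNReal.ofReal η⁻¹ :=
          lintegral_mono_set (Aux.Ioo_subset_iUnion_Ioc hl0 hl1 hs)
      _ ≤ ∑' k : ℕ, ∫⁻ η in (if 1 ≤ k ∧ (k : ℝ) ≤ s
              then Set.Ioc (lam ^ (k + 1)) (lam ^ k) else ∅),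
            (∫⁻ ρ in Set.Ioi (1 / lam),
              volume (Eset d (strip N T₁ T₂) Ω z₀ lam ρ (z₀.2 - η)) /
                volume (dBall d z₀.1 (Real.sqrt η)) *
                ENNReal.ofReal (ρ ^ (-(1 + b)))) *
              ENNReal.ofReal η⁻¹ := lintegral_iUnion_le _ _
      _ ≤ ∑' k : ℕ, (if 1 ≤ k ∧ (k : ℝ) ≤ s then ENNReal.ofReal K * termK k else 0) := by
          refine ENNReal.tsum_le_tsum fun k => ?_
          by_cases hk : 1 ≤ k ∧ (k : ℝ) ≤ s
          · rw [if_pos hk, if_pos hk, htermK]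
            exact Aux.per_k hd hdb ha hcd hb hl0 hl1 hm₀ hSm hΩm z₀ k
          · rw [if_neg hk, if_neg hk, Measure.restrict_empty, lintegral_zero_measure]
      _ = ENNReal.ofReal K * ∑' k : ℕ, (if 1 ≤ k ∧ (k : ℝ) ≤ s then termK k else 0) := by
          rw [← ENNReal.tsum_mul_left]
          refine tsum_congr fun k => ?_
          by_cases hk : 1 ≤ k ∧ (k : ℝ) ≤ s
          · rw [if_pos hk, if_pos hk]
          · rw [if_neg hk, if_neg hk, mul_zero]
      _ ≤ ENNReal.ofReal K * z := mul_le_mul_right hsum _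
  calc ENNReal.ofReal K⁻¹ *
      ∫⁻ η in Set.Ioo (lam ^ s) lam,
        (∫⁻ ρ in Set.Ioi (1 / lam),
          volume (Eset d (strip N T₁ T₂) Ω z₀ lam ρ (z₀.2 - η)) /
            volume (dBall d z₀.1 (Real.sqrt η)) *
            ENNReal.ofReal (ρ ^ (-(1 + b)))) *
          ENNReal.ofReal η⁻¹
      ≤ ENNReal.ofReal K⁻¹ * (ENNReal.ofReal K * z) := mul_le_mul_right hmain _
    _ = (ENNReal.ofReal K⁻¹ * ENNReal.ofReal K) * z := (mul_assoc _ _ _).symm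
    _ = z := by
        rw [← ENNReal.ofReal_mul (by positivity), inv_mul_cancel₀ hKpos.ne',
          ENNReal.ofReal_one, one_mul]
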